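/- arXiv:math/0310216 — 2 statements merged into one kernel-verified Lean document; each statement's English description precedes it below -/
import Mathlib

section
/- Let p ≥ 3 be an odd integer. In ℚ(s), writing t = s², the following identity holds: Θ̂_{p,2}(s) = (t³/(t² − 1)³) · ( ((p−1)/2)·(t^{p+1} − t^{−p−1}) − ((p+1)/2)·(t^{p−1} − t^{−p+1}) ). Equivalently, Θ̂_{p,2}(s) = (t²/(t² − 1)²)·( ((p−1)/2)·(t^p + t^{−p}) − (t^{p−1} − t^{−(p−1)})/(t − t^{−1}) ). -/
set_option maxHeartbeats 1000000


/-- `Δ_{p,q}(s) = ((s^{pq} − s^{−pq})(s − s^{−1})) / ((s^p − s^{−p})(s^q − s^{−q}))`,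
the Alexander polynomial of the `(p,q)` torus knot evaluated at `t = s²`. -/
noncomputable def torusDelta {F : Type*} [Field F] (p q : ℕ) (s : F) : F :=
  ((s ^ (p * q) - s⁻¹ ^ (p * q)) * (s - s⁻¹)) / ((s ^ p - s⁻¹ ^ p) * (s ^ q - s⁻¹ ^ q))

/-- `φ_{p,q}(s) = (s^p + s^{−p})/(s^p − s^{−p}) − q·(s^{pq} + s^{−pq})/(s^{pq} − s^{−pq})`. -/
noncomputable def torusPhi {F : Type*} [Field F] (p q : ℕ) (s : F) : F :=
  (s ^ p + s⁻¹ ^ p) / (s ^ p - s⁻¹ ^ p) -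
    (q : F) * ((s ^ (p * q) + s⁻¹ ^ (p * q)) / (s ^ (p * q) - s⁻¹ ^ (p * q)))

/-- `ψ_{p,q}(s) = Δ_{p,q}(s)·φ_{p,q}(s)`. -/
noncomputable def torusPsi {F : Type*} [Field F] (p q : ℕ) (s : F) : F :=
  torusDelta p q s * torusPhi p q s

/-- The 2-loop polynomial of the torus knot `T(p,q)`:
`Θ_{p,q}(s₁,s₂,s₃) = −(1/4)·Σ_{(i,j,k)} ψ_{p,q}(s_i)·ψ_{q,p}(s_j)·Δ_{p,q}(s_k)`,
the sum running over all six permutations `(i,j,k)` of `(1,2,3)`. -/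
noncomputable def torusTheta {F : Type*} [Field F] (p q : ℕ) (s₁ s₂ s₃ : F) : F :=
  -(1/4) * (torusPsi p q s₁ * torusPsi q p s₂ * torusDelta p q s₃
    + torusPsi p q s₁ * torusPsi q p s₃ * torusDelta p q s₂
    + torusPsi p q s₂ * torusPsi q p s₁ * torusDelta p q s₃
    + torusPsi p q s₂ * torusPsi q p s₃ * torusDelta p q s₁
    + torusPsi p q s₃ * torusPsi q p s₁ * torusDelta p q s₂
    + torusPsi p q s₃ * torusPsi q p s₂ * torusDelta p q s₁)

/-- The reduced 2-loop polynomial of the torus knot `T(p,q)`: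
`Θ̂_{p,q}(s) = ψ_{p,q}(s)·ψ_{q,p}(s) / (2(s − s^{−1})²)`. -/
noncomputable def torusThetaHat {F : Type*} [Field F] (p q : ℕ) (s : F) : F :=
  torusPsi p q s * torusPsi q p s / (2 * (s - s⁻¹) ^ 2)

lemma ratX_pow_ne_one (n : ℕ) (hn : n ≠ 0) : (RatFunc.X : RatFunc ℚ) ^ n ≠ 1 := by
  intro h
  have h1 : (algebraMap (Polynomial ℚ) (RatFunc ℚ)) (Polynomial.X ^ n) =
      (algebraMap (Polynomial ℚ) (RatFunc ℚ)) 1 := by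
    simpa [map_pow, RatFunc.algebraMap_X] using h
  have h2 := RatFunc.algebraMap_injective ℚ h1
  have := congrArg Polynomial.natDegree h2
  simp [Polynomial.natDegree_X_pow] at this
  exact hn this

lemma key_lemma {F : Type*} [Field F] [CharZero F] (s a c : F) (hs : s ≠ 0) (ha : a ≠ 0)
    (ha2 : a ^ 2 - 1 ≠ 0) (ha4 : a ^ 4 - 1 ≠ 0)
    (hs2 : s ^ 2 - 1 ≠ 0) (hs4 : s ^ 4 - 1 ≠ 0) :
    (((a ^ 2 - a⁻¹ ^ 2) * (s - s⁻¹) / ((a - a⁻¹) * (s ^ 2 - s⁻¹ ^ 2)) *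
        ((a + a⁻¹) / (a - a⁻¹) - 2 * ((a ^ 2 + a⁻¹ ^ 2) / (a ^ 2 - a⁻¹ ^ 2))))
      *
      ((a ^ 2 - a⁻¹ ^ 2) * (s - s⁻¹) / ((s ^ 2 - s⁻¹ ^ 2) * (a - a⁻¹)) *
        ((s ^ 2 + s⁻¹ ^ 2) / (s ^ 2 - s⁻¹ ^ 2) -
          (c + 1) * ((a ^ 2 + a⁻¹ ^ 2) / (a ^ 2 - a⁻¹ ^ 2))))
      / (2 * (s - s⁻¹) ^ 2)
    = (s ^ 2) ^ 3 / ((s ^ 2) ^ 2 - 1) ^ 3 *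
        ((c + 1 - 1) / 2 * (a ^ 2 * s ^ 2 - a⁻¹ ^ 2 * s⁻¹ ^ 2) -
          (c + 1 + 1) / 2 * (a ^ 2 * s⁻¹ ^ 2 - a⁻¹ ^ 2 * s ^ 2)))
    ∧
    (((a ^ 2 - a⁻¹ ^ 2) * (s - s⁻¹) / ((a - a⁻¹) * (s ^ 2 - s⁻¹ ^ 2)) *
        ((a + a⁻¹) / (a - a⁻¹) - 2 * ((a ^ 2 + a⁻¹ ^ 2) / (a ^ 2 - a⁻¹ ^ 2))))
      *
      ((a ^ 2 - a⁻¹ ^ 2) * (s - s⁻¹) / ((s ^ 2 - s⁻¹ ^ 2) * (a - a⁻¹)) *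
        ((s ^ 2 + s⁻¹ ^ 2) / (s ^ 2 - s⁻¹ ^ 2) -
          (c + 1) * ((a ^ 2 + a⁻¹ ^ 2) / (a ^ 2 - a⁻¹ ^ 2))))
      / (2 * (s - s⁻¹) ^ 2)
    = (s ^ 2) ^ 2 / ((s ^ 2) ^ 2 - 1) ^ 2 *
        ((c + 1 - 1) / 2 * (a ^ 2 + a⁻¹ ^ 2) -
          (a ^ 2 * s⁻¹ ^ 2 - a⁻¹ ^ 2 * s ^ 2) / (s ^ 2 - s⁻¹ ^ 2))) := by
  have r1 : s - s⁻¹ = (s ^ 2 - 1) / s := by field_simp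
  have r2 : s ^ 2 - s⁻¹ ^ 2 = (s ^ 4 - 1) / s ^ 2 := by
    rw [inv_pow]; field_simp
  have r3 : s ^ 2 + s⁻¹ ^ 2 = (s ^ 4 + 1) / s ^ 2 := by
    rw [inv_pow]; field_simp
  have r4 : a - a⁻¹ = (a ^ 2 - 1) / a := by field_simp
  have r5 : a + a⁻¹ = (a ^ 2 + 1) / a := by field_simp
  have r6 : a ^ 2 - a⁻¹ ^ 2 = (a ^ 4 - 1) / a ^ 2 := by
    rw [inv_pow]; field_simp
  have r7 : a ^ 2 + a⁻¹ ^ 2 = (a ^ 4 + 1) / a ^ 2 := by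
    rw [inv_pow]; field_simp
  have hs4' : (s ^ 2) ^ 2 - 1 ≠ 0 := by rw [← pow_mul]; exact hs4
  constructor
  · rw [r1, r2, r3, r4, r5, r6, r7]
    rw [inv_pow, inv_pow]
    field_simp
    ring
  · rw [r1, r2, r3, r4, r5, r6, r7]
    field_simp
    ring

/-- The reduced 2-loop polynomial of the `(p,2)` torus knot, for odd `p ≥ 3`.
In `ℚ(s)`, with `t = s²`,
`Θ̂_{p,2}(s) = (t³/(t²−1)³)·( ((p−1)/2)(t^{p+1} − t^{−p−1}) − ((p+1)/2)(t^{p−1} − t^{−p+1}) )`,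
equivalently
`Θ̂_{p,2}(s) = (t²/(t²−1)²)·( ((p−1)/2)(t^p + t^{−p}) − (t^{p−1} − t^{−(p−1)})/(t − t⁻¹) )`. -/
theorem torusThetaHat_p2_formula (p : ℕ) (hp : 3 ≤ p) (hodd : Odd p) :
    ∀ t : RatFunc ℚ, t = (RatFunc.X : RatFunc ℚ) ^ 2 →
      (torusThetaHat p 2 (RatFunc.X : RatFunc ℚ) =
        (t ^ 3 / (t ^ 2 - 1) ^ 3) *
          ((((p : RatFunc ℚ) - 1) / 2) * (t ^ (p + 1) - t⁻¹ ^ (p + 1)) -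
            (((p : RatFunc ℚ) + 1) / 2) * (t ^ (p - 1) - t⁻¹ ^ (p - 1)))) ∧
      (torusThetaHat p 2 (RatFunc.X : RatFunc ℚ) =
        (t ^ 2 / (t ^ 2 - 1) ^ 2) *
          ((((p : RatFunc ℚ) - 1) / 2) * (t ^ p + t⁻¹ ^ p) -
            (t ^ (p - 1) - t⁻¹ ^ (p - 1)) / (t - t⁻¹))) := by
  intro t ht
  subst ht
  haveI : CharZero (RatFunc ℚ) :=
    charZero_of_injective_algebraMap (algebraMap ℚ (RatFunc ℚ)).injective
  obtain ⟨m, rfl⟩ : ∃ m, p = m + 1 := ⟨p - 1, by omega⟩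
  set X : RatFunc ℚ := RatFunc.X with hX
  have hs : X ≠ 0 := RatFunc.X_ne_zero
  have hsi : X⁻¹ ≠ 0 := inv_ne_zero hs
  have ha : X ^ (m + 1) ≠ 0 := pow_ne_zero _ hs
  have hs2 : X ^ 2 - 1 ≠ 0 := sub_ne_zero.mpr (ratX_pow_ne_one 2 (by omega))
  have hs4 : X ^ 4 - 1 ≠ 0 := sub_ne_zero.mpr (ratX_pow_ne_one 4 (by omega))
  have ha2 : (X ^ (m + 1)) ^ 2 - 1 ≠ 0 := by
    rw [← pow_mul]; exact sub_ne_zero.mpr (ratX_pow_ne_one _ (by omega))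
  have ha4 : (X ^ (m + 1)) ^ 4 - 1 ≠ 0 := by
    rw [← pow_mul]; exact sub_ne_zero.mpr (ratX_pow_ne_one _ (by omega))
  have E1 : X ^ ((m + 1) * 2) = (X ^ (m + 1)) ^ 2 := pow_mul X (m + 1) 2
  have E2 : X⁻¹ ^ ((m + 1) * 2) = ((X ^ (m + 1))⁻¹) ^ 2 := by
    rw [pow_mul, inv_pow]
  have E3 : X ^ (2 * (m + 1)) = (X ^ (m + 1)) ^ 2 := by
    rw [mul_comm]; exact E1
  have E4 : X⁻¹ ^ (2 * (m + 1)) = ((X ^ (m + 1))⁻¹) ^ 2 := by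
    rw [mul_comm]; exact E2
  have E5 : X⁻¹ ^ (m + 1) = (X ^ (m + 1))⁻¹ := inv_pow X (m + 1)
  have E6 : (X ^ 2) ^ (m + 1 + 1) = (X ^ (m + 1)) ^ 2 * X ^ 2 := by
    rw [← pow_mul, show 2 * (m + 1 + 1) = (m + 1) * 2 + 2 by ring, pow_add, pow_mul]
  have E7 : ((X ^ 2)⁻¹) ^ (m + 1 + 1) = ((X ^ (m + 1))⁻¹) ^ 2 * X⁻¹ ^ 2 := by
    rw [← inv_pow, ← pow_mul, show 2 * (m + 1 + 1) = (m + 1) * 2 + 2 by ring, pow_add,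
      pow_mul, inv_pow X (m + 1)]
  have E8 : (X ^ 2) ^ (m + 1) = (X ^ (m + 1)) ^ 2 := by
    rw [← pow_mul, show 2 * (m + 1) = (m + 1) * 2 by ring, pow_mul]
  have E9 : ((X ^ 2)⁻¹) ^ (m + 1) = ((X ^ (m + 1))⁻¹) ^ 2 := by
    rw [← inv_pow, ← pow_mul, show 2 * (m + 1) = (m + 1) * 2 by ring, pow_mul,
      inv_pow X (m + 1)]
  have E10 : (X ^ 2) ^ m = (X ^ (m + 1)) ^ 2 * X⁻¹ ^ 2 := by
    have h : (X ^ 2) ^ m * X ^ 2 = (X ^ (m + 1)) ^ 2 := by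
      rw [← pow_mul, ← pow_mul, ← pow_add]; congr 1; ring
    rw [← h, inv_pow, mul_assoc, mul_inv_cancel₀ (pow_ne_zero 2 hs), mul_one]
  have E11 : ((X ^ 2)⁻¹) ^ m = ((X ^ (m + 1))⁻¹) ^ 2 * X ^ 2 := by
    rw [inv_pow, E10, mul_inv, ← inv_pow, ← inv_pow]
    rw [show (X⁻¹ ^ 2)⁻¹ = X ^ 2 by rw [inv_pow, inv_inv], inv_pow]
  simp only [torusThetaHat, torusPsi, torusDelta, torusPhi, Nat.add_sub_cancel,
    Nat.cast_ofNat, Nat.cast_add, Nat.cast_one, E1, E2, E3, E4, E5, E6, E7, E8, E9,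
    E10, E11]
  rw [show ((X ^ 2)⁻¹ : RatFunc ℚ) = X⁻¹ ^ 2 from (inv_pow X 2).symm]
  exact key_lemma X (X ^ (m + 1)) (m : RatFunc ℚ) hs ha ha2 ha4 hs2 hs4
end

section
/- Let p and q be coprime positive integers. Specializing the rational function Θ_{p,q}(s₁, s₂, s₃) ∈ ℚ(s₁, s₂) (with s₃ = (s₁s₂)^{−1}) along s₂ = s₁^{−1} (so that s₃ = 1) yields, in ℚ(s₁): Θ_{p,q}(s₁, s₁^{−1}, 1) = (1/2)·ψ_{p,q}(s₁)·ψ_{q,p}(s₁), where the factors Δ_{p,q} and ψ_{p,q} evaluated at the point 1 are interpreted by their limits there, namely Δ_{p,q}(1) = 1 and ψ_{p,q}(1) = 0. Consequently Θ_{p,q}(s, s^{−1}, 1) / (s − s^{−1})² = Θ̂_{p,q}(s). -/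
open scoped Classical

/-- `Δ_{p,q}` with its value at the point `1` interpreted by its limit there,
namely `Δ_{p,q}(1) = 1`. -/
noncomputable def torusDeltaReg {F : Type*} [Field F] (p q : ℕ) (s : F) : F :=
  if s = 1 then 1 else torusDelta p q s

/-- `ψ_{p,q}` with its value at the point `1` interpreted by its limit there,
namely `ψ_{p,q}(1) = 0`. -/
noncomputable def torusPsiReg {F : Type*} [Field F] (p q : ℕ) (s : F) : F :=
  if s = 1 then 0 else torusPsi p q s

/-- The 2-loop polynomial `Θ_{p,q}(s₁,s₂,s₃)` with the factors `Δ_{p,q}`, `ψ_{p,q}`,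
`ψ_{q,p}` evaluated at the point `1` interpreted by their limits there. -/
noncomputable def torusThetaReg {F : Type*} [Field F] (p q : ℕ) (s₁ s₂ s₃ : F) : F :=
  -(1/4) * (torusPsiReg p q s₁ * torusPsiReg q p s₂ * torusDeltaReg p q s₃
    + torusPsiReg p q s₁ * torusPsiReg q p s₃ * torusDeltaReg p q s₂
    + torusPsiReg p q s₂ * torusPsiReg q p s₁ * torusDeltaReg p q s₃
    + torusPsiReg p q s₂ * torusPsiReg q p s₃ * torusDeltaReg p q s₁
    + torusPsiReg p q s₃ * torusPsiReg q p s₁ * torusDeltaReg p q s₂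
    + torusPsiReg p q s₃ * torusPsiReg q p s₂ * torusDeltaReg p q s₁)

lemma torusDelta_inv {F : Type*} [Field F] (p q : ℕ) (s : F) :
    torusDelta p q s⁻¹ = torusDelta p q s := by
  unfold torusDelta; rw [inv_inv]; congr 1 <;> ring

lemma torusPsi_inv {F : Type*} [Field F] (p q : ℕ) (s : F) :
    torusPsi p q s⁻¹ = -torusPsi p q s := by
  have hf : ∀ a b : F, (a + b) / (a - b) = -((b + a) / (b - a)) := by
    intro a b; rw [show a - b = -(b - a) by ring, div_neg, add_comm]
  unfold torusPsi torusPhi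
  rw [torusDelta_inv, inv_inv, hf (s⁻¹ ^ p) (s ^ p), hf (s⁻¹ ^ (p * q)) (s ^ (p * q))]
  ring

instance : CharZero (RatFunc ℚ) :=
  charZero_of_injective_algebraMap (algebraMap ℚ (RatFunc ℚ)).injective

lemma ratFunc_X_ne_one : (RatFunc.X : RatFunc ℚ) ≠ 1 := by
  intro h
  have h2 : (Polynomial.X : Polynomial ℚ) = 1 := by
    apply RatFunc.algebraMap_injective ℚ
    simpa [RatFunc.algebraMap_X] using h
  have h3 := congrArg (fun f => Polynomial.coeff f 1) h2
  simp [Polynomial.coeff_one] at h3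

/-- Specializing `Θ_{p,q}(s₁, s₂, (s₁s₂)⁻¹)` along `s₂ = s₁⁻¹` (so that `s₃ = 1`), with
the factors at the point `1` interpreted by their limits (`Δ_{p,q}(1) = 1`,
`ψ_{p,q}(1) = 0`), yields `Θ_{p,q}(s, s⁻¹, 1) = (1/2)·ψ_{p,q}(s)·ψ_{q,p}(s)` in `ℚ(s)`;
consequently `Θ_{p,q}(s, s⁻¹, 1)/(s − s⁻¹)² = Θ̂_{p,q}(s)`. -/
theorem torusTheta_specialization (p q : ℕ) (hp : 0 < p) (hq : 0 < q)
    (hpq : Nat.Coprime p q) :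
    torusThetaReg p q (RatFunc.X : RatFunc ℚ) (RatFunc.X : RatFunc ℚ)⁻¹ 1 =
      (1/2) * (torusPsi p q (RatFunc.X : RatFunc ℚ) *
        torusPsi q p (RatFunc.X : RatFunc ℚ)) ∧
    torusThetaReg p q (RatFunc.X : RatFunc ℚ) (RatFunc.X : RatFunc ℚ)⁻¹ 1 /
        ((RatFunc.X : RatFunc ℚ) - (RatFunc.X : RatFunc ℚ)⁻¹) ^ 2 =
      torusThetaHat p q (RatFunc.X : RatFunc ℚ) := by
  have hX : (RatFunc.X : RatFunc ℚ) ≠ 1 := ratFunc_X_ne_one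
  have hXi : (RatFunc.X : RatFunc ℚ)⁻¹ ≠ 1 := fun h => hX (inv_eq_one.mp h)
  have h1 : torusThetaReg p q (RatFunc.X : RatFunc ℚ) (RatFunc.X : RatFunc ℚ)⁻¹ 1 =
      (1/2) * (torusPsi p q (RatFunc.X : RatFunc ℚ) *
        torusPsi q p (RatFunc.X : RatFunc ℚ)) := by
    unfold torusThetaReg torusPsiReg torusDeltaReg
    simp only [if_pos rfl, if_neg hX, if_neg hXi, if_true, eq_self_iff_true]
    rw [torusPsi_inv, torusPsi_inv]
    ring
  refine ⟨h1, ?_⟩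
  rw [h1]; unfold torusThetaHat; rw [div_eq_mul_inv, div_eq_mul_inv, div_eq_mul_inv, mul_inv]; ring
end
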